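/- arXiv:0903.0912 — 7 statements merged into one kernel-verified Lean document; each statement's English description precedes it below -/
import Mathlib

section
/- Let s ≥ 1 be a natural number and let Λ be a strongly regular graph with parameters (v, k, λ, μ) = (6s − 1, 2s, 0, s). Then s = 1 and Λ is isomorphic to the cycle graph on 5 vertices (the pentagon). -/
open scoped Classical
open Finset

section PentagonAux

variable {V : Type*} [Fintype V] {Λ : SimpleGraph V}

set_option linter.unusedSectionVars false

lemma cn_finset (a b : V) :
    Fintype.card (Λ.commonNeighbors a b) = (Λ.neighborFinset a ∩ Λ.neighborFinset b).card := by
  rw [← Set.toFinset_card]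
  congr 1
  ext z
  rw [Set.mem_toFinset]; simp [SimpleGraph.commonNeighbors, SimpleGraph.mem_neighborFinset]

lemma tri_free {n k μ : ℕ} (h : Λ.IsSRGWith n k 0 μ) {a b c : V}
    (hab : Λ.Adj a b) (hac : Λ.Adj a c) (hbc : Λ.Adj b c) : False := by
  have h0 := h.of_adj a b hab
  rw [Fintype.card_eq_zero_iff] at h0
  exact h0.elim' ⟨c, hac, hbc⟩

lemma no_big {s : ℕ} (hs2 : 2 ≤ s) (h : Λ.IsSRGWith (6*s-1) (2*s) 0 s) : False := by
  have hdeg : ∀ v : V, (Λ.neighborFinset v).card = 2*s := fun v => by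
    rw [Λ.card_neighborFinset_eq_degree, h.regular v]
  have hcn : ∀ a b : V, a ≠ b → ¬Λ.Adj a b →
      (Λ.neighborFinset a ∩ Λ.neighborFinset b).card = s := fun a b hne hna => by
    rw [← cn_finset]; exact h.of_not_adj hne hna
  -- get a vertex
  have hpos : 0 < Fintype.card V := by rw [h.card]; omega
  obtain ⟨x⟩ := Fintype.card_pos_iff.mp hpos
  set A : Finset V := insert x (Λ.neighborFinset x) with hA
  set M : Finset V := univ \ A with hM
  have hxA : x ∉ Λ.neighborFinset x := Λ.notMem_neighborFinset_self x
  have hcardA : A.card = 2*s + 1 := by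
    rw [hA, card_insert_of_notMem hxA, hdeg]
  have hcardM : M.card = 4*s - 2 := by
    rw [hM, card_sdiff_of_subset (subset_univ A), card_univ, h.card, hcardA]; omega
  have hmemM : ∀ z : V, z ∈ M ↔ (z ≠ x ∧ ¬Λ.Adj x z) := by
    intro z
    simp [hM, hA, SimpleGraph.mem_neighborFinset]
  -- each vertex of M has exactly s neighbors in M
  have hMnbr : ∀ m : V, m ∈ M → (Λ.neighborFinset m ∩ M).card = s := by
    intro m hm
    obtain ⟨hmx, hmax⟩ := (hmemM m).mp hm
    have h1 : Λ.neighborFinset m ∩ M = Λ.neighborFinset m \ A := by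
      ext z; simp [hM]
    have hxnm : x ∉ Λ.neighborFinset m := by
      rw [SimpleGraph.mem_neighborFinset]
      exact fun hadj => hmax hadj.symm
    have h2 : Λ.neighborFinset m ∩ A = Λ.neighborFinset m ∩ Λ.neighborFinset x := by
      rw [hA, Finset.inter_comm, Finset.insert_inter_of_notMem hxnm, Finset.inter_comm]
    have h3 := Finset.card_inter_add_card_sdiff (Λ.neighborFinset m) A
    rw [h2, hcn m x hmx (fun hadj => hmax hadj.symm), hdeg] at h3
    rw [h1]; omega
  -- get m1 ∈ M
  have hMne : M.Nonempty := by
    rw [← Finset.card_pos, hcardM]; omega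
  obtain ⟨m1, hm1⟩ := hMne
  obtain ⟨hm1x, hm1ax⟩ := (hmemM m1).mp hm1
  -- claim B
  have claimB : ∀ y m' : V, Λ.Adj x y → ¬Λ.Adj m1 y → m' ∈ Λ.neighborFinset m1 ∩ M →
      Λ.Adj y m' := by
    intro y m' hxy hm1y hm'
    have hym1 : y ≠ m1 := fun he => hm1ax (he ▸ hxy)
    have hsub : Λ.neighborFinset m1 ∩ Λ.neighborFinset y ⊆ Λ.neighborFinset m1 ∩ M := by
      intro z hz
      rw [Finset.mem_inter, SimpleGraph.mem_neighborFinset, SimpleGraph.mem_neighborFinset] at hz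
      obtain ⟨h1, h2⟩ := hz
      rw [Finset.mem_inter, SimpleGraph.mem_neighborFinset, hmemM]
      refine ⟨h1, fun he => hm1ax (he ▸ h1).symm, fun hxz => tri_free h hxy hxz h2⟩
    have hceq : Λ.neighborFinset m1 ∩ Λ.neighborFinset y = Λ.neighborFinset m1 ∩ M := by
      apply Finset.eq_of_subset_of_card_le hsub
      rw [hMnbr m1 hm1, hcn m1 y (fun he => hym1 he.symm) hm1y]
    rw [← hceq, Finset.mem_inter, SimpleGraph.mem_neighborFinset, SimpleGraph.mem_neighborFinset]
      at hm'
    exact hm'.2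
  -- get two distinct neighbors of m1 in M
  have h2le : 1 < (Λ.neighborFinset m1 ∩ M).card := by rw [hMnbr m1 hm1]; omega
  rw [Finset.one_lt_card] at h2le
  obtain ⟨m2, hm2, m3, hm3, hne23⟩ := h2le
  have hadj12 : Λ.Adj m1 m2 := by
    have := (Finset.mem_inter.mp hm2).1; rwa [SimpleGraph.mem_neighborFinset] at this
  have hadj13 : Λ.Adj m1 m3 := by
    have := (Finset.mem_inter.mp hm3).1; rwa [SimpleGraph.mem_neighborFinset] at this
  have hm2M := (Finset.mem_inter.mp hm2).2
  obtain ⟨hm2x, hm2ax⟩ := (hmemM m2).mp hm2M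
  have hna23 : ¬Λ.Adj m2 m3 := fun hadj => tri_free h hadj12 hadj13 hadj
  -- final count
  have hsub : insert m1 (Λ.neighborFinset x ∩ Λ.neighborFinset m2)
      ⊆ Λ.neighborFinset m2 ∩ Λ.neighborFinset m3 := by
    intro z hz
    rw [Finset.mem_insert] at hz
    rw [Finset.mem_inter, SimpleGraph.mem_neighborFinset, SimpleGraph.mem_neighborFinset]
    rcases hz with rfl | hz
    · exact ⟨hadj12.symm, hadj13.symm⟩
    · rw [Finset.mem_inter, SimpleGraph.mem_neighborFinset, SimpleGraph.mem_neighborFinset] at hz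
      obtain ⟨hxz, hm2z⟩ := hz
      have hm1z : ¬Λ.Adj m1 z := fun hadj => tri_free h hadj12 hadj hm2z
      exact ⟨hm2z, (claimB z m3 hxz hm1z hm3).symm⟩
  have hcard1 : (insert m1 (Λ.neighborFinset x ∩ Λ.neighborFinset m2)).card = s + 1 := by
    rw [Finset.card_insert_of_notMem, hcn x m2 (fun he => hm2x he.symm) hm2ax]
    rw [Finset.mem_inter, SimpleGraph.mem_neighborFinset]
    exact fun hc => hm1ax hc.1
  have := Finset.card_le_card hsub
  rw [hcard1, hcn m2 m3 hne23 hna23] at this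
  omega


lemma pair_of_card_two {F : Finset V} (hF : F.card = 2) {x : V} (hx : x ∈ F) :
    ∃ c, c ≠ x ∧ F = {x, c} := by
  obtain ⟨u, v, huv, rfl⟩ := Finset.card_eq_two.mp hF
  rcases Finset.mem_insert.mp hx with rfl | hx'
  · exact ⟨v, fun he => huv he.symm, rfl⟩
  · rw [Finset.mem_singleton] at hx'
    subst hx'
    exact ⟨u, huv, Finset.pair_comm u x⟩

lemma pentagon (h : Λ.IsSRGWith 5 2 0 1) : Nonempty (Λ ≃g SimpleGraph.cycleGraph 5) := by
  have hdeg : ∀ v : V, (Λ.neighborFinset v).card = 2 := fun v => by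
    rw [Λ.card_neighborFinset_eq_degree, h.regular v]
  have hcn : ∀ a b : V, a ≠ b → ¬Λ.Adj a b →
      (Λ.neighborFinset a ∩ Λ.neighborFinset b).card = 1 := fun a b hne hna => by
    rw [← cn_finset]; exact h.of_not_adj hne hna
  have hpos : 0 < Fintype.card V := by rw [h.card]; omega
  obtain ⟨x0⟩ := Fintype.card_pos_iff.mp hpos
  obtain ⟨a, b, hab, hN⟩ := Finset.card_eq_two.mp (hdeg x0)
  have hxa : Λ.Adj x0 a := by
    rw [← SimpleGraph.mem_neighborFinset, hN]; exact Finset.mem_insert_self a {b}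
  have hxb : Λ.Adj x0 b := by
    rw [← SimpleGraph.mem_neighborFinset, hN]; simp
  have hnab : ¬Λ.Adj a b := fun hadj => tri_free h hxa hxb hadj
  obtain ⟨c, hcx0, hNa⟩ := pair_of_card_two (hdeg a)
    (by rw [SimpleGraph.mem_neighborFinset]; exact hxa.symm)
  obtain ⟨d, hdx0, hNb⟩ := pair_of_card_two (hdeg b)
    (by rw [SimpleGraph.mem_neighborFinset]; exact hxb.symm)
  have hac : Λ.Adj a c := by
    rw [← SimpleGraph.mem_neighborFinset, hNa]; simp
  have hbd : Λ.Adj b d := by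
    rw [← SimpleGraph.mem_neighborFinset, hNb]; simp
  -- distinctness
  have hax0 : a ≠ x0 := hxa.ne'
  have hbx0 : b ≠ x0 := hxb.ne'
  have hca : c ≠ a := hac.ne'
  have hcb : c ≠ b := fun he => hnab (he ▸ hac)
  have hdb : d ≠ b := hbd.ne'
  have hda : d ≠ a := fun he => hnab (he ▸ hbd).symm
  have hcd : c ≠ d := by
    intro he
    subst he
    have hsub : ({x0, c} : Finset V) ⊆ Λ.neighborFinset a ∩ Λ.neighborFinset b := by
      intro z hz
      rcases Finset.mem_insert.mp hz with rfl | hz'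
      · rw [Finset.mem_inter, SimpleGraph.mem_neighborFinset, SimpleGraph.mem_neighborFinset]
        exact ⟨hxa.symm, hxb.symm⟩
      · rw [Finset.mem_singleton] at hz'
        subst hz'
        rw [Finset.mem_inter, SimpleGraph.mem_neighborFinset, SimpleGraph.mem_neighborFinset]
        exact ⟨hac, hbd⟩
    have h2 : ({x0, c} : Finset V).card = 2 := by
      rw [Finset.card_insert_of_notMem (by simpa using fun he => hcx0 he.symm)]
      simp
    have := Finset.card_le_card hsub
    rw [h2, hcn a b hab hnab] at this
    omega
  -- non-adjacencies
  have hnxc : ¬Λ.Adj x0 c := by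
    intro hadj
    have : c ∈ Λ.neighborFinset x0 := by rwa [SimpleGraph.mem_neighborFinset]
    rw [hN] at this
    rcases Finset.mem_insert.mp this with he | he
    · exact hca he
    · exact hcb (Finset.mem_singleton.mp he)
  have hnxd : ¬Λ.Adj x0 d := by
    intro hadj
    have : d ∈ Λ.neighborFinset x0 := by rwa [SimpleGraph.mem_neighborFinset]
    rw [hN] at this
    rcases Finset.mem_insert.mp this with he | he
    · exact hda he
    · exact hdb (Finset.mem_singleton.mp he)
  have hnad : ¬Λ.Adj a d := by
    intro hadj
    have : d ∈ Λ.neighborFinset a := by rwa [SimpleGraph.mem_neighborFinset]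
    rw [hNa] at this
    rcases Finset.mem_insert.mp this with he | he
    · exact hdx0 he
    · exact hcd (Finset.mem_singleton.mp he).symm
  have hnbc : ¬Λ.Adj b c := by
    intro hadj
    have : c ∈ Λ.neighborFinset b := by rwa [SimpleGraph.mem_neighborFinset]
    rw [hNb] at this
    rcases Finset.mem_insert.mp this with he | he
    · exact hcx0 he
    · exact hcd (Finset.mem_singleton.mp he)
  -- the five vertices exhaust V
  have hScard : ({x0, a, b, c, d} : Finset V).card = 5 := by
    rw [Finset.card_insert_of_notMem (by
        simp only [Finset.mem_insert, Finset.mem_singleton]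
        push_neg
        exact ⟨fun he => hax0 he.symm, fun he => hbx0 he.symm,
          fun he => hcx0 he.symm, fun he => hdx0 he.symm⟩),
      Finset.card_insert_of_notMem (by
        simp only [Finset.mem_insert, Finset.mem_singleton]
        push_neg
        exact ⟨hab, fun he => hca he.symm, fun he => hda he.symm⟩),
      Finset.card_insert_of_notMem (by
        simp only [Finset.mem_insert, Finset.mem_singleton]
        push_neg
        exact ⟨fun he => hcb he.symm, fun he => hdb he.symm⟩),
      Finset.card_insert_of_notMem (by simp [hcd])]
    simp
  have hSuniv : ({x0, a, b, c, d} : Finset V) = univ :=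
    Finset.eq_univ_of_card _ (by rw [hScard, h.card])
  have hAcd : Λ.Adj c d := by
    have hsub : Λ.neighborFinset c ⊆ {a, d} := by
      intro z hz
      rw [SimpleGraph.mem_neighborFinset] at hz
      have hzS : z ∈ ({x0, a, b, c, d} : Finset V) := hSuniv ▸ Finset.mem_univ z
      simp only [Finset.mem_insert, Finset.mem_singleton] at hzS ⊢
      rcases hzS with rfl | rfl | rfl | rfl | rfl
      · exact absurd hz.symm hnxc
      · exact Or.inl rfl
      · exact absurd hz.symm hnbc
      · exact absurd hz (Λ.irrefl)
      · exact Or.inr rfl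
    have heq : Λ.neighborFinset c = {a, d} := Finset.eq_of_subset_of_card_le hsub (by
      rw [hdeg c, Finset.card_insert_of_notMem (by simp only [Finset.mem_singleton]; exact fun he => hda he.symm),
        Finset.card_singleton])
    have hd : d ∈ Λ.neighborFinset c := by rw [heq]; simp
    rwa [SimpleGraph.mem_neighborFinset] at hd
  -- directed adjacency facts
  have hax : Λ.Adj a x0 := hxa.symm
  have hbx : Λ.Adj b x0 := hxb.symm
  have hca' : Λ.Adj c a := hac.symm
  have hdb' : Λ.Adj d b := hbd.symm
  have hdc : Λ.Adj d c := hAcd.symm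
  have hncx : ¬Λ.Adj c x0 := fun hh => hnxc hh.symm
  have hndx : ¬Λ.Adj d x0 := fun hh => hnxd hh.symm
  have hnba : ¬Λ.Adj b a := fun hh => hnab hh.symm
  have hnda : ¬Λ.Adj d a := fun hh => hnad hh.symm
  have hncb : ¬Λ.Adj c b := fun hh => hnbc hh.symm
  -- directed ne facts
  have ne1 : x0 ≠ a := hax0.symm
  have ne2 : x0 ≠ b := hbx0.symm
  have ne3 : x0 ≠ c := hcx0.symm
  have ne4 : x0 ≠ d := hdx0.symm
  have ne5 : a ≠ c := hca.symm
  have ne6 : a ≠ d := hda.symm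
  have ne7 : b ≠ c := hcb.symm
  have ne8 : b ≠ d := hdb.symm
  have ne9 : d ≠ c := hcd.symm
  have ne10 : b ≠ a := hab.symm
  let f : Fin 5 → V := ![x0, a, c, d, b]
  have hinj : Function.Injective f := by
    intro i j hij
    fin_cases i <;> fin_cases j <;>
      first
        | rfl
        | (simp only [f, Matrix.cons_val_zero, Matrix.cons_val_one, Matrix.head_cons,
            Matrix.cons_val_two, Matrix.tail_cons, Matrix.cons_val_three,
            Matrix.cons_val_four, Matrix.head_fin_const] at hij
           exact absurd hij (by assumption))
  have hbij : Function.Bijective f :=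
    (Fintype.bijective_iff_injective_and_card f).mpr
      ⟨hinj, by rw [Fintype.card_fin, h.card]⟩
  refine ⟨SimpleGraph.Iso.symm ⟨Equiv.ofBijective f hbij, ?_⟩⟩
  intro i j
  fin_cases i <;> fin_cases j <;>
    simp only [Equiv.ofBijective_apply, f, Matrix.cons_val_zero, Matrix.cons_val_one,
      Matrix.head_cons, Matrix.cons_val_two, Matrix.tail_cons, Matrix.cons_val_three,
      Matrix.cons_val_four, Matrix.head_fin_const] <;>
    first
      | exact iff_of_false (Λ.irrefl) (by decide)
      | exact iff_of_true (by assumption) (by decide)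
      | exact iff_of_false (by assumption) (by decide)

end PentagonAux

/-- a strongly regular graph with parameters `(6s - 1, 2s, 0, s)` (with `s ≥ 1`)
only exists for `s = 1`, and it is then isomorphic to the pentagon (the 5-cycle). -/
theorem srg_lambda_zero_is_pentagon {V : Type*} [Fintype V] (s : ℕ) (hs : 1 ≤ s)
    (Λ : SimpleGraph V) (h : Λ.IsSRGWith (6 * s - 1) (2 * s) 0 s) :
    s = 1 ∧ Nonempty (Λ ≃g SimpleGraph.cycleGraph 5) := by
  have hs1 : s = 1 := by
    by_contra hne
    exact no_big (by omega) h
  subst hs1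
  exact ⟨rfl, pentagon h⟩
end

section
/- Let s ≥ 1 be a natural number and let Λ be a strongly regular graph with parameters (v, k, λ, μ) = (6s − 3, 2s, 1, s). Then s ∈ {1, 2, 3, 5}; equivalently, the number of vertices v belongs to {3, 9, 15, 27}. -/
open scoped Classical

open Matrix Finset

private lemma trace_conj_eq3 {n : Type*} [Fintype n] (Q M : Matrix n n ℚ) :
    (Qᵀ * M * Q).trace = ∑ j, (fun i => Q i j) ⬝ᵥ M *ᵥ (fun i => Q i j) := by
  simp only [Matrix.trace, Matrix.diag, Matrix.mul_apply, dotProduct, Matrix.mulVec,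
    transpose_apply, Finset.sum_mul, Finset.mul_sum]
  refine Finset.sum_congr rfl fun a _ => ?_
  rw [Finset.sum_comm]
  exact Finset.sum_congr rfl fun b _ => Finset.sum_congr rfl fun c _ => by ring

private lemma had_quadform3 {n : Type*} [Fintype n] [DecidableEq n] (Q : Matrix n n ℚ)
    (x : n → ℚ) :
    x ⬝ᵥ ((Q ⊙ Q) *ᵥ x) = (Matrix.diagonal x * Q * Matrix.diagonal x * Qᵀ).trace := by
  simp only [Matrix.trace, Matrix.diag, Matrix.mul_apply, dotProduct, Matrix.mulVec,
    Matrix.hadamard_apply, Matrix.diagonal_apply, transpose_apply, ite_mul, mul_ite,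
    zero_mul, mul_zero, Finset.sum_ite_eq, Finset.sum_ite_eq', Finset.mem_univ, if_true,
    Finset.mul_sum, Finset.sum_mul]
  refine Finset.sum_congr rfl fun i _ => Finset.sum_congr rfl fun j _ => by ring

private lemma trace_sq_nonneg3 {n : Type*} [Fintype n] (S : Matrix n n ℚ) (hS : Sᵀ = S) :
    0 ≤ (S * S).trace := by
  have : (S * S).trace = ∑ i, ∑ j, S i j * S i j := by
    simp only [Matrix.trace, Matrix.diag, Matrix.mul_apply]
    refine Finset.sum_congr rfl fun i _ => Finset.sum_congr rfl fun j _ => ?_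
    rw [show S j i = S i j from by nth_rewrite 1 [← hS]; rw [transpose_apply]]
  rw [this]
  exact Finset.sum_nonneg fun i _ => Finset.sum_nonneg fun j _ => mul_self_nonneg _

private lemma key_trace_nonneg3 {n : Type*} [Fintype n] [DecidableEq n] (Q : Matrix n n ℚ)
    (hsymm : Qᵀ = Q) (hidem : Q * Q = Q) : 0 ≤ (Q * (Q ⊙ Q)).trace := by
  have hidem' : ∀ X : Matrix n n ℚ, Q * (Q * X) = Q * X := fun X => by
    rw [← Matrix.mul_assoc, hidem]
  have hM : ∀ x : n → ℚ, 0 ≤ x ⬝ᵥ ((Q ⊙ Q) *ᵥ x) := by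
    intro x
    rw [had_quadform3, hsymm]
    set D := Matrix.diagonal x with hD
    have hSsymm : (Q * D * Q)ᵀ = Q * D * Q := by
      rw [Matrix.transpose_mul, Matrix.transpose_mul, Matrix.diagonal_transpose, hsymm,
        Matrix.mul_assoc]
    have e : (Q * D * Q) * (Q * D * Q) = Q * (D * (Q * (D * Q))) := by
      simp only [Matrix.mul_assoc, hidem, hidem']
    have e2 : (D * (Q * (D * Q))) * Q = D * Q * D * Q := by
      simp only [Matrix.mul_assoc, hidem, hidem']
    calc (D * Q * D * Q).trace = ((D * (Q * (D * Q))) * Q).trace := by rw [e2]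
      _ = (Q * (D * (Q * (D * Q)))).trace := by rw [Matrix.trace_mul_comm]
      _ = ((Q * D * Q) * (Q * D * Q)).trace := by rw [e]
      _ ≥ 0 := trace_sq_nonneg3 _ hSsymm
  have key : (Q * (Q ⊙ Q)).trace = (Qᵀ * (Q ⊙ Q) * Q).trace := by
    rw [hsymm]
    calc (Q * (Q ⊙ Q)).trace = ((Q * Q) * (Q ⊙ Q)).trace := by rw [hidem]
      _ = (Q * (Q ⊙ Q) * Q).trace := by rw [Matrix.mul_assoc, Matrix.trace_mul_comm]
  rw [key, trace_conj_eq3]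
  exact Finset.sum_nonneg fun j _ => hM _

/-- a strongly regular graph with parameters `(6s - 3, 2s, 1, s)` (with `s ≥ 1`)
only exists for `s ∈ {1, 2, 3, 5}`, i.e. with `3`, `9`, `15` or `27` vertices. -/
theorem srg_lambda_one_params {V : Type*} [Fintype V] (s : ℕ) (hs : 1 ≤ s)
    (Λ : SimpleGraph V) (h : Λ.IsSRGWith (6 * s - 3) (2 * s) 1 s) :
    s ∈ ({1, 2, 3, 5} : Set ℕ) ∧ Fintype.card V ∈ ({3, 9, 15, 27} : Set ℕ) := by
  classical
  set q : ℚ := (s : ℚ) with hqdef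
  have hq1 : (1:ℚ) ≤ q := by rw [hqdef]; exact_mod_cast hs
  set A : Matrix V V ℚ := Λ.adjMatrix ℚ with hA
  set J : Matrix V V ℚ := Matrix.of fun _ _ => (1:ℚ) with hJ
  have h63 : (3:ℕ) ≤ 6 * s := by omega
  have hcard : (Fintype.card V : ℚ) = 6 * q - 3 := by
    rw [h.card, Nat.cast_sub h63]; push_cast; ring
  have hC : Λᶜ.adjMatrix ℚ = J - 1 - A := by
    ext i j
    by_cases hij : i = j
    · subst hij
      simp [hA, hJ, Matrix.one_apply]
    · by_cases hadj : Λ.Adj i j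
      · simp [hA, hJ, Matrix.one_apply, hij, hadj]
      · simp [hA, hJ, Matrix.one_apply, hij, hadj]
  have hA2 : A * A = q • J + (1 - q) • A + q • (1 : Matrix V V ℚ) := by
    have hm := h.matrix_eq (α := ℚ)
    rw [hC, pow_two] at hm
    rw [hm]
    simp only [← Nat.cast_smul_eq_nsmul ℚ]
    push_cast
    match_scalars <;> ring
  have hAJ : A * J = (2 * q) • J := by
    ext i j
    rw [hA, SimpleGraph.adjMatrix_mul_apply]
    simp [hJ, Matrix.smul_apply, h.regular i, hqdef]
  have hJA : J * A = (2 * q) • J := by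
    ext i j
    rw [hA, SimpleGraph.mul_adjMatrix_apply]
    simp [hJ, Matrix.smul_apply, h.regular j, hqdef]
  have hJJ : J * J = (6 * q - 3) • J := by
    ext i j
    simp [hJ, Matrix.mul_apply, Matrix.smul_apply, hcard.symm]
  have hJtr : J.trace = 6 * q - 3 := by
    simp only [hJ, Matrix.trace, Matrix.diag, Matrix.of_apply, Finset.sum_const,
      Finset.card_univ, nsmul_eq_mul, mul_one]
    exact hcard
  have hAtr : A.trace = 0 := by rw [hA]; exact Λ.trace_adjMatrix ℚ
  have hATsymm : Aᵀ = A := by rw [hA]; exact Λ.transpose_adjMatrix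
  have hJTsymm : Jᵀ = J := rfl
  set B : Matrix V V ℚ := (3:ℚ) • (1 : Matrix V V ℚ) - (3:ℚ) • A + J with hB
  have hB2 : B * B = (3 * (q + 1)) • B := by
    rw [hB]
    simp only [sub_mul, mul_sub, add_mul, mul_add, smul_mul_assoc, mul_smul_comm,
      one_mul, mul_one, hA2, hAJ, hJA, hJJ]
    match_scalars <;> ring
  have hq3 : (0:ℚ) < 3 * (q + 1) := by linarith
  have hq3' : (3 * (q + 1) : ℚ) ≠ 0 := ne_of_gt hq3
  set c : ℚ := (3 * (q + 1))⁻¹ with hc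
  have hcpos : 0 < c := inv_pos.mpr hq3
  set Q : Matrix V V ℚ := c • B with hQ
  have hQidem : Q * Q = Q := by
    rw [hQ, smul_mul_assoc, mul_smul_comm, hB2, smul_smul, smul_smul]
    congr 1
    rw [hc, mul_assoc, inv_mul_cancel₀ hq3', mul_one]
  have hQsymm : Qᵀ = Q := by
    rw [hQ, Matrix.transpose_smul, hB, Matrix.transpose_add, Matrix.transpose_sub,
      Matrix.transpose_smul, Matrix.transpose_smul, Matrix.transpose_one, hATsymm, hJTsymm]
  -- integrality of the multiplicity
  have hproj : Matrix.toLin' Q ∘ₗ Matrix.toLin' Q = Matrix.toLin' Q := by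
    rw [← Matrix.toLin'_mul, hQidem]
  obtain ⟨p, hp⟩ := (LinearMap.isProj_iff_isIdempotentElem (Matrix.toLin' Q)).mpr hproj
  have htr := hp.trace
  have htrQ : LinearMap.trace ℚ (V → ℚ) (Matrix.toLin' Q) = Q.trace := by
    rw [LinearMap.trace_eq_matrix_trace ℚ (Pi.basisFun ℚ V), LinearMap.toMatrix_eq_toMatrix',
      LinearMap.toMatrix'_toLin']
  set g : ℕ := Module.finrank ℚ p with hg
  have hQtr : Q.trace = c * (24 * q - 12) := by
    rw [hQ, Matrix.trace_smul, hB, Matrix.trace_add, Matrix.trace_sub, Matrix.trace_smul,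
      Matrix.trace_smul, Matrix.trace_one, hAtr, hJtr, hcard]
    simp only [smul_eq_mul]
    ring
  have hgq : (g : ℚ) * (3 * (q + 1)) = 24 * q - 12 := by
    rw [hg, ← htr, htrQ, hQtr, hc]
    field_simp
  have h2412 : (12:ℕ) ≤ 24 * s := by omega
  have hgnat : g * (3 * s + 3) = 24 * s - 12 := by
    have : ((g * (3 * s + 3) : ℕ) : ℚ) = ((24 * s - 12 : ℕ) : ℚ) := by
      rw [Nat.cast_sub h2412]
      push_cast
      linear_combination hgq
    exact_mod_cast this
  -- the Krein-type bound via the Schur (Hadamard) product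
  set M : Matrix V V ℚ := (15:ℚ) • (1 : Matrix V V ℚ) + (3:ℚ) • A + J with hM
  have hBB : B ⊙ B = M := by
    ext i j
    by_cases hij : i = j
    · subst hij
      simp [hB, hM, hJ, hA, Matrix.hadamard_apply, Matrix.one_apply]
      try norm_num
    · by_cases hadj : Λ.Adj i j
      · simp [hB, hM, hJ, hA, Matrix.hadamard_apply, Matrix.one_apply, hij, hadj]
        try norm_num
      · simp [hB, hM, hJ, hA, Matrix.hadamard_apply, Matrix.one_apply, hij, hadj]
        try norm_num
  have hQQ : Q ⊙ Q = (c * c) • M := by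
    rw [hQ, Matrix.smul_hadamard, Matrix.hadamard_smul, hBB, smul_smul]
  have hBM : B * M = (45 - 9*q) • (1 : Matrix V V ℚ) + (9*q - 45) • A + (15 - 3*q) • J := by
    rw [hB, hM]
    simp only [sub_mul, mul_sub, add_mul, mul_add, smul_mul_assoc, mul_smul_comm,
      one_mul, mul_one, hA2, hAJ, hJA, hJJ]
    match_scalars <;> ring
  have htrBM : (B * M).trace = 12 * (6*q - 3) * (5 - q) := by
    rw [hBM, Matrix.trace_add, Matrix.trace_add, Matrix.trace_smul, Matrix.trace_smul,
      Matrix.trace_smul, Matrix.trace_one, hAtr, hJtr, hcard]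
    simp only [smul_eq_mul]
    ring
  have hkey := key_trace_nonneg3 Q hQsymm hQidem
  have htrfin : (Q * (Q ⊙ Q)).trace = c^3 * (12 * (6*q - 3) * (5 - q)) := by
    rw [hQQ, mul_smul_comm, hQ, smul_mul_assoc, Matrix.trace_smul, Matrix.trace_smul,
      htrBM, smul_eq_mul, smul_eq_mul]
    ring
  rw [htrfin] at hkey
  have hc3 : 0 < c^3 := by positivity
  have hq5 : q ≤ 5 := by
    by_contra hlt
    push_neg at hlt
    have h1 : (0:ℚ) < 12 * (6 * q - 3) := by linarith
    have hneg : c ^ 3 * (12 * (6 * q - 3) * (5 - q)) < 0 :=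
      mul_neg_of_pos_of_neg hc3 (mul_neg_of_pos_of_neg h1 (by linarith))
    linarith
  have hs5 : s ≤ 5 := by
    rw [hqdef] at hq5
    exact_mod_cast hq5
  have hsor : s = 1 ∨ s = 2 ∨ s = 3 ∨ s = 5 := by interval_cases s <;> omega
  constructor
  · rcases hsor with rfl | rfl | rfl | rfl <;> simp
  · rw [h.card]
    rcases hsor with rfl | rfl | rfl | rfl <;> try norm_num
end

section
/- Let s ≥ 1 and let Λ be a strongly regular graph with parameters (6s − 3, 2s, 1, s), and let y be a vertex of Λ. Then the induced subgraph of Λ on the set Λ(y,2) of vertices at distance 2 from y contains no triangle. -/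
open scoped Classical

/-- in a strongly regular graph with parameters `(6s - 3, 2s, 1, s)`, the set of
vertices at distance `2` from any vertex `y` contains no triangle. -/
theorem srg_lambda_one_distance_two_triangle_free {V : Type*} [Fintype V] (s : ℕ) (hs : 1 ≤ s)
    (Λ : SimpleGraph V) (h : Λ.IsSRGWith (6 * s - 3) (2 * s) 1 s)
    (y a b c : V) (ha : Λ.dist y a = 2) (hb : Λ.dist y b = 2) (hc : Λ.dist y c = 2)
    (hab : Λ.Adj a b) (hbc : Λ.Adj b c) (hac : Λ.Adj a c) : False := by
  classical
  -- y is not adjacent to and distinct from a, b, c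
  have hne : ∀ x : V, Λ.dist y x = 2 → y ≠ x ∧ ¬ Λ.Adj y x := by
    intro x hx
    constructor
    · rintro rfl; simp [Λ.dist_self] at hx
    · intro hadj
      have := (Λ.dist_eq_one_iff_adj).2 hadj
      omega
  obtain ⟨hya, hyaA⟩ := hne a ha
  obtain ⟨hyb, hybA⟩ := hne b hb
  obtain ⟨hyc, hycA⟩ := hne c hc
  -- common neighbor sets with y have card s
  have hca : Fintype.card (Λ.commonNeighbors y a) = s := h.of_not_adj hya hyaA
  have hcb : Fintype.card (Λ.commonNeighbors y b) = s := h.of_not_adj hyb hybA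
  have hcc : Fintype.card (Λ.commonNeighbors y c) = s := h.of_not_adj hyc hycA
  -- uniqueness of common neighbors of adjacent vertices
  have huniq : ∀ x1 x2 w z : V, Λ.Adj x1 x2 → w ∈ Λ.commonNeighbors x1 x2 →
      z ∈ Λ.commonNeighbors x1 x2 → w = z := by
    intro x1 x2 w z hadj hw hz
    have h1 : Fintype.card (Λ.commonNeighbors x1 x2) = 1 := h.of_adj x1 x2 hadj
    have := Fintype.card_le_one_iff.1 (le_of_eq h1)
    exact Subtype.mk_eq_mk.1 (this ⟨w, hw⟩ ⟨z, hz⟩)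
  -- Finsets
  set Sa := (Λ.commonNeighbors y a).toFinset with hSa
  set Sb := (Λ.commonNeighbors y b).toFinset with hSb
  set Sc := (Λ.commonNeighbors y c).toFinset with hSc
  have cardSa : Sa.card = s := by rw [hSa, Set.toFinset_card]; exact hca
  have cardSb : Sb.card = s := by rw [hSb, Set.toFinset_card]; exact hcb
  have cardSc : Sc.card = s := by rw [hSc, Set.toFinset_card]; exact hcc
  -- pairwise disjoint: common element would be the unique common neighbor of an edge,
  -- which is the third triangle vertex, but y is not adjacent to it.
  have key : ∀ x1 x2 x3 : V, Λ.Adj x1 x2 → Λ.Adj x1 x3 → Λ.Adj x2 x3 → ¬ Λ.Adj y x3 →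
      Disjoint (Λ.commonNeighbors y x1).toFinset (Λ.commonNeighbors y x2).toFinset := by
    intro x1 x2 x3 h12 h13 h23 hny
    rw [Finset.disjoint_left]
    intro w hw1 hw2
    rw [Set.mem_toFinset] at hw1 hw2
    have hwc : w ∈ Λ.commonNeighbors x1 x2 := ⟨hw1.2, hw2.2⟩
    have hx3 : x3 ∈ Λ.commonNeighbors x1 x2 := ⟨h13, h23⟩
    have : w = x3 := huniq x1 x2 w x3 h12 hwc hx3
    exact hny (this ▸ hw1.1)
  have dab : Disjoint Sa Sb := key a b c hab hac hbc hycA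
  have dac : Disjoint Sa Sc := key a c b hac hab hbc.symm hybA
  have dbc : Disjoint Sb Sc := key b c a hbc hab.symm hac.symm hyaA
  -- union is inside N(y), of size 2s
  have hsub : Sa ∪ Sb ∪ Sc ⊆ Λ.neighborFinset y := by
    intro w hw
    simp only [Finset.mem_union, hSa, hSb, hSc, Set.mem_toFinset] at hw
    rw [SimpleGraph.mem_neighborFinset]
    rcases hw with (hw | hw) | hw <;> exact hw.1
  have hcardN : (Λ.neighborFinset y).card = 2 * s := h.regular y
  have hcardU : (Sa ∪ Sb ∪ Sc).card = 3 * s := by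
    rw [Finset.card_union_of_disjoint, Finset.card_union_of_disjoint dab,
      cardSa, cardSb, cardSc]
    · ring
    · exact Finset.disjoint_union_left.2 ⟨dac, dbc⟩
  have := Finset.card_le_card hsub
  omega
end

section
/- Let q be a prime power with q ≡ 1 (mod 4) and let P(q) be the Paley graph on the finite field F_q, in which two distinct elements x, y are adjacent iff x − y is a nonzero square. Then P(q) is strongly regular with parameters (v, k, λ, μ) = (q, (q − 1)/2, (q − 5)/4, (q − 1)/4): every vertex has (q − 1)/2 neighbours, any two adjacent vertices have exactly (q − 5)/4 common neighbours, and any two distinct non-adjacent vertices have exactly (q − 1)/4 common neighbours; in particular P(q) has diameter 2. -/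
open scoped Classical
open Finset

section PaleyAux

variable {F : Type*} [Field F] [Fintype F] [DecidableEq F]

private lemma paley_sum_shift (hF2 : ringChar F ≠ 2) {c : F} (hc : c ≠ 0) :
    ∑ t : F, quadraticChar F t * quadraticChar F (t + c) = -1 := by
  have h0 : (fun t : F => quadraticChar F t * quadraticChar F (t + c)) 0 = 0 := by simp
  rw [← Finset.sum_erase (f := fun t : F => quadraticChar F t * quadraticChar F (t + c))
    Finset.univ h0]
  have h1 : ∀ t ∈ Finset.univ.erase (0 : F),
      quadraticChar F t * quadraticChar F (t + c) = quadraticChar F (1 + c * t⁻¹) := by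
    intro t ht
    have ht0 : t ≠ 0 := Finset.ne_of_mem_erase ht
    have h : t + c = t * (1 + c * t⁻¹) := by field_simp
    rw [h, map_mul, ← mul_assoc, ← map_mul, ← sq, quadraticChar_sq_one' ht0, one_mul]
  rw [Finset.sum_congr rfl h1]
  have h2 : ∑ t ∈ Finset.univ.erase (0 : F), quadraticChar F (1 + c * t⁻¹)
      = ∑ u ∈ Finset.univ.erase (1 : F), quadraticChar F u := by
    refine Finset.sum_nbij' (fun t => 1 + c * t⁻¹) (fun u => c * (u - 1)⁻¹) ?_ ?_ ?_ ?_ ?_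
    · intro t ht
      have ht0 : t ≠ 0 := Finset.ne_of_mem_erase ht
      have : c * t⁻¹ ≠ 0 := mul_ne_zero hc (inv_ne_zero ht0)
      simp only [Finset.mem_erase, Finset.mem_univ, and_true]
      intro h
      exact this (by linear_combination h)
    · intro u hu
      have hu1 : u - 1 ≠ 0 := sub_ne_zero.mpr (Finset.ne_of_mem_erase hu)
      simp only [Finset.mem_erase, Finset.mem_univ, and_true]
      exact mul_ne_zero hc (inv_ne_zero hu1)
    · intro t ht
      have ht0 : t ≠ 0 := Finset.ne_of_mem_erase ht
      field_simp
      simp [hc]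
    · intro u hu
      have hu1 : u - 1 ≠ 0 := sub_ne_zero.mpr (Finset.ne_of_mem_erase hu)
      field_simp
      ring
    · intro t _; rfl
  rw [h2, Finset.sum_erase_eq_sub (Finset.mem_univ (1 : F)), quadraticChar_sum_zero hF2]
  simp

private lemma paley_sum_lin (hF2 : ringChar F ≠ 2) (x : F) :
    ∑ z : F, quadraticChar F (z - x) = 0 := by
  rw [← quadraticChar_sum_zero (F := F) hF2]
  exact Equiv.sum_comp (Equiv.subRight x) fun t => quadraticChar F t

private lemma paley_sum_prod (hF2 : ringChar F ≠ 2) {x y : F} (hxy : x ≠ y) :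
    ∑ z : F, quadraticChar F (z - x) * quadraticChar F (z - y) = -1 := by
  calc ∑ z : F, quadraticChar F (z - x) * quadraticChar F (z - y)
      = ∑ z : F, quadraticChar F (z - x) * quadraticChar F ((z - x) + (x - y)) := by
        refine Finset.sum_congr rfl fun z _ => ?_
        rw [sub_add_sub_cancel]
    _ = ∑ t : F, quadraticChar F t * quadraticChar F (t + (x - y)) :=
        Equiv.sum_comp (Equiv.subRight x) fun t => quadraticChar F t * quadraticChar F (t + (x - y))
    _ = -1 := paley_sum_shift hF2 (sub_ne_zero.mpr hxy)

private lemma paley_count (hF2 : ringChar F ≠ 2) (hneg : quadraticChar F (-1 : F) = 1)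
    (G : SimpleGraph F) (hG : ∀ x y : F, G.Adj x y ↔ x ≠ y ∧ IsSquare (x - y))
    {x y : F} (hxy : x ≠ y) :
    4 * (((Finset.univ.filter fun z : F => G.Adj x z ∧ G.Adj y z).card : ℤ))
      = (Fintype.card F : ℤ) - 3 - 2 * quadraticChar F (x - y) := by
  have hsym : ∀ a b : F, quadraticChar F (a - b) = quadraticChar F (b - a) := by
    intro a b
    rw [show a - b = -1 * (b - a) by ring, map_mul, hneg, one_mul]
  have hAdj : ∀ a b : F, a ≠ b → (G.Adj a b ↔ quadraticChar F (b - a) = 1) := by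
    intro a b hab
    rw [hG, ← hsym a b, quadraticChar_one_iff_isSquare (sub_ne_zero.mpr hab)]
    simp [hab]
  set f : F → ℤ := fun z => (1 + quadraticChar F (z - x)) * (1 + quadraticChar F (z - y))
    with hf
  have hT : ∑ z : F, f z = (Fintype.card F : ℤ) - 1 := by
    have he : ∑ z : F, f z
        = (∑ _z : F, (1 : ℤ)) + ((∑ z : F, quadraticChar F (z - x))
          + ((∑ z : F, quadraticChar F (z - y))
          + ∑ z : F, quadraticChar F (z - x) * quadraticChar F (z - y))) := by
      rw [← Finset.sum_add_distrib, ← Finset.sum_add_distrib, ← Finset.sum_add_distrib]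
      exact Finset.sum_congr rfl fun z _ => by rw [hf]; ring
    rw [he, paley_sum_lin hF2 x, paley_sum_lin hF2 y, paley_sum_prod hF2 hxy]
    simp [Finset.card_univ, sub_eq_add_neg]
  have hyx : y ∈ Finset.univ.erase x := Finset.mem_erase.mpr ⟨hxy.symm, Finset.mem_univ y⟩
  have h1 : f x + ∑ z ∈ Finset.univ.erase x, f z = ∑ z : F, f z :=
    Finset.add_sum_erase _ f (Finset.mem_univ x)
  have h2 : f y + ∑ z ∈ (Finset.univ.erase x).erase y, f z
      = ∑ z ∈ Finset.univ.erase x, f z :=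
    Finset.add_sum_erase _ f hyx
  have hfx : f x = 1 + quadraticChar F (x - y) := by
    rw [hf]; simp
  have hfy : f y = 1 + quadraticChar F (x - y) := by
    rw [hf]; simp [hsym y x]
  have h3 : ∑ z ∈ (Finset.univ.erase x).erase y, f z
      = ∑ z ∈ (Finset.univ.erase x).erase y,
          (if G.Adj x z ∧ G.Adj y z then (4 : ℤ) else 0) := by
    refine Finset.sum_congr rfl fun z hz => ?_
    have hzy : z ≠ y := (Finset.mem_erase.mp hz).1
    have hzx : z ≠ x := (Finset.mem_erase.mp (Finset.mem_erase.mp hz).2).1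
    by_cases hx1 : quadraticChar F (z - x) = 1
    · by_cases hy1 : quadraticChar F (z - y) = 1
      · rw [if_pos ⟨(hAdj x z hzx.symm).mpr hx1, (hAdj y z hzy.symm).mpr hy1⟩, hf]
        simp only [hx1, hy1]; norm_num
      · have hm : quadraticChar F (z - y) = -1 :=
          (quadraticChar_eq_neg_one_iff_not_one (sub_ne_zero.mpr hzy)).mpr hy1
        rw [if_neg (fun hc => hy1 ((hAdj y z hzy.symm).mp hc.2)), hf]
        simp only [hm]; ring
    · have hm : quadraticChar F (z - x) = -1 :=
        (quadraticChar_eq_neg_one_iff_not_one (sub_ne_zero.mpr hzx)).mpr hx1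
      rw [if_neg (fun hc => hx1 ((hAdj x z hzx.symm).mp hc.1)), hf]
      simp only [hm]; ring
  have h4 : ((Finset.univ.erase x).erase y).filter (fun z => G.Adj x z ∧ G.Adj y z)
      = Finset.univ.filter (fun z => G.Adj x z ∧ G.Adj y z) := by
    ext z
    simp only [Finset.mem_filter, Finset.mem_erase, Finset.mem_univ, true_and, and_true]
    exact ⟨fun h => h.2, fun h => ⟨⟨h.2.ne', h.1.ne'⟩, h⟩⟩
  have h5 : ∑ z ∈ (Finset.univ.erase x).erase y,
        (if G.Adj x z ∧ G.Adj y z then (4 : ℤ) else 0)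
      = 4 * (((Finset.univ.filter fun z : F => G.Adj x z ∧ G.Adj y z).card : ℤ)) := by
    rw [← Finset.sum_filter, h4, Finset.sum_const, nsmul_eq_mul]
    ring
  have h6 : ∑ z ∈ (Finset.univ.erase x).erase y, f z
      = 4 * (((Finset.univ.filter fun z : F => G.Adj x z ∧ G.Adj y z).card : ℤ)) :=
    h3.trans h5
  linarith [h1, h2, hT, hfx, hfy, h6]

end PaleyAux

/-- the Paley graph `P(q)` (for a prime power `q ≡ 1 mod 4`) is strongly regular
with parameters `(q, (q-1)/2, (q-5)/4, (q-1)/4)`; in particular it has diameter `2`. -/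
theorem paley_is_srg (q : ℕ) (hq : q % 4 = 1) (F : Type*) [Field F] [Fintype F]
    (hF : Fintype.card F = q) (G : SimpleGraph F)
    (hG : ∀ x y : F, G.Adj x y ↔ x ≠ y ∧ IsSquare (x - y)) :
    G.IsSRGWith q ((q - 1) / 2) ((q - 5) / 4) ((q - 1) / 4) ∧
      ∀ x y : F, x ≠ y → ¬G.Adj x y → ∃ z : F, G.Adj x z ∧ G.Adj y z := by
  classical
  have hq5 : 5 ≤ q := by
    have h2 : 2 ≤ q := hF ▸ Fintype.one_lt_card
    omega
  have hF2 : ringChar F ≠ 2 := by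
    intro h
    have h' := FiniteField.even_card_of_char_two h
    rw [hF] at h'
    omega
  have hneg : quadraticChar F (-1 : F) = 1 := by
    rw [quadraticChar_neg_one hF2, hF, ZMod.χ₄_nat_eq_if_mod_four]
    have h1 : q % 2 = 1 := by omega
    simp [h1, hq]
  have hAdj : ∀ a b : F, a ≠ b → (G.Adj a b ↔ quadraticChar F (b - a) = 1) := by
    intro a b hab
    have hsym : quadraticChar F (a - b) = quadraticChar F (b - a) := by
      rw [show a - b = -1 * (b - a) by ring, map_mul, hneg, one_mul]
    rw [hG, ← hsym, quadraticChar_one_iff_isSquare (sub_ne_zero.mpr hab)]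
    simp [hab]
  have hdeg : ∀ v : F, 2 * G.degree v + 1 = q := by
    intro v
    have hs : ∑ z : F, (1 + quadraticChar F (z - v)) = (q : ℤ) := by
      rw [Finset.sum_add_distrib, paley_sum_lin hF2 v]
      simp [Finset.card_univ, hF]
    have h1 : (1 + quadraticChar F (v - v))
        + ∑ z ∈ Finset.univ.erase v, (1 + quadraticChar F (z - v))
        = ∑ z : F, (1 + quadraticChar F (z - v)) :=
      Finset.add_sum_erase _ (fun z => 1 + quadraticChar F (z - v)) (Finset.mem_univ v)
    have h0 : (1 : ℤ) + quadraticChar F (v - v) = 1 := by simp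
    have h2 : ∑ z ∈ Finset.univ.erase v, (1 + quadraticChar F (z - v))
        = ∑ z ∈ Finset.univ.erase v, (if G.Adj v z then (2 : ℤ) else 0) := by
      refine Finset.sum_congr rfl fun z hz => ?_
      have hzv : z ≠ v := Finset.ne_of_mem_erase hz
      by_cases h : G.Adj v z
      · rw [if_pos h, (hAdj v z hzv.symm).mp h]; norm_num
      · have hm : quadraticChar F (z - v) = -1 :=
          (quadraticChar_eq_neg_one_iff_not_one (sub_ne_zero.mpr hzv)).mpr
            (fun h1 => h ((hAdj v z hzv.symm).mpr h1))
        rw [if_neg h, hm]; ring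
    have hfe : (Finset.univ.erase v).filter (fun z => G.Adj v z) = G.neighborFinset v := by
      ext z
      simp only [Finset.mem_filter, Finset.mem_erase, Finset.mem_univ, true_and, and_true,
        SimpleGraph.mem_neighborFinset]
      exact ⟨fun h => h.2, fun h => ⟨h.ne', h⟩⟩
    have h3 : ∑ z ∈ Finset.univ.erase v, (if G.Adj v z then (2 : ℤ) else 0)
        = 2 * (G.degree v : ℤ) := by
      rw [← Finset.sum_filter, hfe, Finset.sum_const, nsmul_eq_mul,
        SimpleGraph.card_neighborFinset_eq_degree]
      ring
    have hfin : (2 * (G.degree v) : ℤ) + 1 = q := by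
      rw [h2, h3] at h1
      linarith [hs, h0, h1]
    exact_mod_cast hfin
  have hcn : ∀ x y : F, Fintype.card (G.commonNeighbors x y)
      = (Finset.univ.filter fun z => G.Adj x z ∧ G.Adj y z).card := by
    intro x y
    rw [← Set.toFinset_card]
    congr 1
    ext z
    simp [SimpleGraph.mem_commonNeighbors]
  constructor
  · refine ⟨hF, fun v => by have := hdeg v; omega, ?_, ?_⟩
    · intro v w hvw
      have hne : v ≠ w := hvw.ne
      have hx : quadraticChar F (v - w) = 1 := (hAdj w v hne.symm).mp hvw.symm
      have h4 := paley_count hF2 hneg G hG hne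
      rw [hx, hF] at h4
      rw [hcn v w]
      omega
    · intro v w hvw hna
      have hx : quadraticChar F (v - w) = -1 := by
        apply quadraticChar_neg_one_iff_not_isSquare.mpr
        intro hsq
        exact hna ((hG v w).mpr ⟨hvw, hsq⟩)
      have h4 := paley_count hF2 hneg G hG hvw
      rw [hx, hF] at h4
      rw [hcn v w]
      omega
  · intro x y hxy hna
    have hx : quadraticChar F (x - y) = -1 := by
      apply quadraticChar_neg_one_iff_not_isSquare.mpr
      intro hsq
      exact hna ((hG x y).mpr ⟨hxy, hsq⟩)
    have h4 := paley_count hF2 hneg G hG hxy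
    rw [hx, hF] at h4
    have hpos : 0 < (Finset.univ.filter fun z : F => G.Adj x z ∧ G.Adj y z).card := by omega
    obtain ⟨z, hz⟩ := Finset.card_pos.mp hpos
    exact ⟨z, (Finset.mem_filter.mp hz).2⟩
end

section
/- Let n ≥ 3 and let E be a Seidel matrix on X = {1,…,n}. Assume that G(E) acts doubly transitively on X: for all i, j, k, l ∈ X with i ≠ j and k ≠ l, there exist a permutation σ of X and coefficients ν_a ∈ {−1, 1} (a ∈ X) such that σ(i) = k, σ(j) = l, and E_{σ(a)σ(b)} = ν_a ν_b E_{ab} for all a, b ∈ X. Then the real symmetric matrix E has at most two distinct eigenvalues. -/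
open scoped Classical

/-- A Seidel matrix: symmetric, `1` on the diagonal, entries `±1`. -/
def IsSeidel {n : ℕ} (E : Matrix (Fin n) (Fin n) ℝ) : Prop :=
  E.IsSymm ∧ (∀ i, E i i = 1) ∧ ∀ i j, E i j = 1 ∨ E i j = -1

/-- Two matrices are associated if `E'ᵢⱼ = νᵢ νⱼ Eᵢⱼ` for some signs `νᵢ ∈ {-1,1}`. -/
def SeidelAssoc {n : ℕ} (E E' : Matrix (Fin n) (Fin n) ℝ) : Prop :=
  ∃ ν : Fin n → ℝ, (∀ i, ν i = 1 ∨ ν i = -1) ∧ ∀ i j, E' i j = ν i * ν j * E i j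

/-- Action of a permutation on a matrix: `(σE)ᵢⱼ = E_{σ⁻¹ i, σ⁻¹ j}`. -/
def permM {n : ℕ} (σ : Equiv.Perm (Fin n)) (E : Matrix (Fin n) (Fin n) ℝ) :
    Matrix (Fin n) (Fin n) ℝ :=
  Matrix.of fun i j => E (σ.symm i) (σ.symm j)

/-- Localization of `E` at the point `j` : `(ʲE)ₖₗ = Eₖⱼ Eₗⱼ Eₖₗ`. -/
def locM {n : ℕ} (E : Matrix (Fin n) (Fin n) ℝ) (j : Fin n) :
    Matrix (Fin n) (Fin n) ℝ :=
  Matrix.of fun k l => E k j * E l j * E k l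

/-- The simple graph encoded by a Seidel matrix: two distinct vertices `i, j` are
adjacent iff `Eᵢⱼ = -1` (for a symmetric matrix this is the natural graph). -/
def seidelGraph {n : ℕ} (E : Matrix (Fin n) (Fin n) ℝ) : SimpleGraph (Fin n) :=
  SimpleGraph.fromRel (fun i j => E i j = -1)

/-- if `G(E)` acts doubly transitively on `X`, then the Seidel matrix `E`
has at most two distinct (real) eigenvalues. -/
theorem seidel_two_eigenvalues (n : ℕ) (hn : 3 ≤ n)
    (E : Matrix (Fin n) (Fin n) ℝ) (hE : IsSeidel E)
    (h2t : ∀ i j k l : Fin n, i ≠ j → k ≠ l →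
      ∃ (σ : Equiv.Perm (Fin n)) (ν : Fin n → ℝ), (∀ a, ν a = 1 ∨ ν a = -1) ∧
        σ i = k ∧ σ j = l ∧ ∀ a b : Fin n, E (σ a) (σ b) = ν a * ν b * E a b) :
    ∃ a b : ℝ, spectrum ℝ E ⊆ {a, b} := by
  obtain ⟨hsym, hdiag, hpm⟩ := hE
  have hsymm : ∀ i j, E j i = E i j := fun i j => (hsym.apply j i).symm
  have hsq : ∀ i j, E i j * E i j = 1 := by
    intro i j; rcases hpm i j with h | h <;> rw [h] <;> norm_num
  haveI : Nonempty (Fin n) := ⟨⟨0, by omega⟩⟩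
  set i₀ : Fin n := ⟨0, by omega⟩
  set j₀ : Fin n := ⟨1, by omega⟩
  have hij0 : i₀ ≠ j₀ := by simp [i₀, j₀, Fin.ext_iff]
  set c : ℝ := (E * E) i₀ j₀ * E i₀ j₀ with hc
  -- off-diagonal entries of E² are c * E i j
  have key : ∀ i j : Fin n, i ≠ j → (E * E) i j = c * E i j := by
    intro i j hij
    obtain ⟨σ, ν, hν, h1, h2, hσ⟩ := h2t i₀ j₀ i j hij0 hij
    have hνsq : ∀ a, ν a * ν a = 1 := by
      intro a; rcases hν a with h | h <;> rw [h] <;> norm_num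
    have hM : (E * E) i j = ν i₀ * ν j₀ * (E * E) i₀ j₀ := by
      rw [Matrix.mul_apply, Matrix.mul_apply]
      rw [← Equiv.sum_comp σ (fun k => E i k * E k j)]
      rw [Finset.mul_sum]
      refine Finset.sum_congr rfl fun a _ => ?_
      have e1 : E i (σ a) = ν i₀ * ν a * E i₀ a := by rw [← h1]; exact hσ i₀ a
      have e2 : E (σ a) j = ν a * ν j₀ * E a j₀ := by rw [← h2]; exact hσ a j₀
      rw [e1, e2]
      have := hνsq a
      linear_combination (ν i₀ * ν j₀ * E i₀ a * E a j₀) * this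
    have hEe : E i j = ν i₀ * ν j₀ * E i₀ j₀ := by rw [← h1, ← h2]; exact hσ i₀ j₀
    rw [hM, hEe, hc]
    have h4 := hsq i₀ j₀
    linear_combination (-(ν i₀ * ν j₀ * (E * E) i₀ j₀)) * h4
  have diag : ∀ i, (E * E) i i = (n : ℝ) := by
    intro i
    rw [Matrix.mul_apply]
    have : ∀ k : Fin n, E i k * E k i = 1 := fun k => by rw [hsymm k i]; exact hsq k i
    rw [Finset.sum_congr rfl fun k _ => this k]
    simp
  set d : ℝ := (n : ℝ) - c with hd
  have hEE : E * E = c • E + d • (1 : Matrix (Fin n) (Fin n) ℝ) := by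
    ext i j
    by_cases h : i = j
    · subst h
      simp only [Matrix.add_apply, Matrix.smul_apply, Matrix.one_apply_eq, smul_eq_mul,
        mul_one, diag i, hdiag i, hd]
      ring
    · simp only [Matrix.add_apply, Matrix.smul_apply, Matrix.one_apply_ne h, smul_eq_mul,
        mul_zero, add_zero, key i j h]
  -- polynomial relation
  set p : Polynomial ℝ := Polynomial.X ^ 2 - Polynomial.C c * Polynomial.X - Polynomial.C d
    with hpdef
  have hp0 : Polynomial.aeval E p = 0 := by
    simp only [hpdef, map_sub, map_mul, map_pow, Polynomial.aeval_X, Polynomial.aeval_C]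
    rw [Algebra.algebraMap_eq_smul_one, Algebra.algebraMap_eq_smul_one, smul_mul_assoc,
      one_mul, sq, hEE]
    abel
  have hroot : ∀ x ∈ spectrum ℝ E, x ^ 2 - c * x - d = 0 := by
    intro x hx
    have hmem := spectrum.subset_polynomial_aeval E p ⟨x, hx, rfl⟩
    rw [hp0, spectrum.zero_eq] at hmem
    simpa [hpdef] using hmem
  by_cases hne : (spectrum ℝ E).Nonempty
  · obtain ⟨a, ha⟩ := hne
    refine ⟨a, c - a, fun x hx => ?_⟩
    have h1 := hroot x hx
    have h2 := hroot a ha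
    have : (x - a) * (x + a - c) = 0 := by linear_combination h1 - h2
    rcases mul_eq_zero.mp this with h | h
    · left; linarith
    · right; simp only [Set.mem_singleton_iff]; linarith
  · exact ⟨0, 0, fun x hx => absurd ⟨x, hx⟩ hne⟩
end

section
/- Let n ≥ 3, let E be a Seidel matrix on X = {1,…,n} and let σ be a permutation of X. The following are equivalent: (a) the matrices E and σE are associated; (b) for every point j ∈ X, σ(ʲE) = ^{σ(j)}E; (c) there exists a point k ∈ X such that σ(ᵏE) = ^{σ(k)}E. -/
open scoped Classical

/-- for a permutation `σ`, the following are equivalent: (a) `E` and `σE` are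
associated; (b) `σ(ʲE) = ^{σ(j)}E` for every `j`; (c) `σ(ᵏE) = ^{σ(k)}E` for some `k`. -/
theorem assoc_perm_iff_loc (n : ℕ) (hn : 3 ≤ n)
    (E : Matrix (Fin n) (Fin n) ℝ) (hE : IsSeidel E) (σ : Equiv.Perm (Fin n)) :
    (SeidelAssoc E (permM σ E) ↔
      ∀ j : Fin n, permM σ (locM E j) = locM E (σ j)) ∧
    (SeidelAssoc E (permM σ E) ↔
      ∃ k : Fin n, permM σ (locM E k) = locM E (σ k)) := by

  obtain ⟨hsym, hdiag, hpm⟩ := hE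
  have hsq : ∀ i j, E i j * E i j = 1 := fun i j => by
    rcases hpm i j with h | h <;> rw [h] <;> norm_num
  have hab : SeidelAssoc E (permM σ E) →
      ∀ j : Fin n, permM σ (locM E j) = locM E (σ j) := by
    rintro ⟨ν, hν, hE'⟩ j
    ext k l
    simp only [permM, locM, Matrix.of_apply]
    have h1 := hE' k (σ j)
    have h2 := hE' l (σ j)
    have h3 := hE' k l
    simp only [permM, Matrix.of_apply, Equiv.symm_apply_apply] at h1 h2 h3
    rw [h1, h2, h3]
    rcases hν k with h | h <;> rw [h] <;>
      rcases hν l with h' | h' <;> rw [h'] <;>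
      rcases hν (σ j) with h'' | h'' <;> rw [h''] <;> ring
  have hca : (∃ k : Fin n, permM σ (locM E k) = locM E (σ k)) →
      SeidelAssoc E (permM σ E) := by
    rintro ⟨k, hk⟩
    refine ⟨fun i => E (σ.symm i) k * E i (σ k), fun i => ?_, fun i j => ?_⟩
    · rcases hpm (σ.symm i) k with h1 | h1 <;> rcases hpm i (σ k) with h2 | h2 <;>
        simp only [h1, h2] <;> norm_num
    · have h : permM σ (locM E k) i j = locM E (σ k) i j := by rw [hk]
      simp only [permM, locM, Matrix.of_apply] at h
      show E (σ.symm i) (σ.symm j) = _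
      linear_combination (E (σ.symm i) k * E (σ.symm j) k) * h
        - E (σ.symm i) (σ.symm j) * E (σ.symm j) k * E (σ.symm j) k * hsq (σ.symm i) k
        - E (σ.symm i) (σ.symm j) * hsq (σ.symm j) k
  exact ⟨⟨hab, fun hb => hca ⟨⟨0, by omega⟩, hb _⟩⟩,
    ⟨fun ha => ⟨⟨0, by omega⟩, hab ha _⟩, hca⟩⟩
end

section
/- Let n ≥ 3 and let E be a Seidel matrix on X = {1,…,n}. Suppose there exist two distinct points x, y ∈ X such that: for all z, w ∈ X ∖ {x} there is a permutation σ of X with σ(ˣE) = ˣE and σ(z) = w, and for all z, w ∈ X ∖ {y} there is a permutation τ of X with τ(ʸE) = ʸE and τ(z) = w. Then G(E) acts doubly transitively on X: for all pairs (i, j) and (k, l) with i ≠ j and k ≠ l there exists a permutation ρ of X such that ρE is associated to E, ρ(i) = k and ρ(j) = l. -/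
open scoped Classical

section aux
variable {n : ℕ}

lemma permM_apply (σ : Equiv.Perm (Fin n)) (E : Matrix (Fin n) (Fin n) ℝ) (i j : Fin n) :
    permM σ E i j = E (σ.symm i) (σ.symm j) := rfl

lemma locM_apply (E : Matrix (Fin n) (Fin n) ℝ) (p k l : Fin n) :
    locM E p k l = E k p * E l p * E k l := rfl

lemma permM_mul (σ τ : Equiv.Perm (Fin n)) (E : Matrix (Fin n) (Fin n) ℝ) :
    permM (σ * τ) E = permM σ (permM τ E) := by
  ext i j; rfl

lemma permM_one (E : Matrix (Fin n) (Fin n) ℝ) : permM 1 E = E := by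
  ext i j; simp [permM, Equiv.Perm.one_symm]

lemma locM_permM (σ : Equiv.Perm (Fin n)) (E : Matrix (Fin n) (Fin n) ℝ) (j : Fin n) :
    locM (permM σ E) (σ j) = permM σ (locM E j) := by
  ext k l; simp [locM, permM]

lemma assoc_refl (E : Matrix (Fin n) (Fin n) ℝ) : SeidelAssoc E E :=
  ⟨fun _ => 1, fun _ => Or.inl rfl, by intro i j; ring⟩

lemma assoc_symm {E E' : Matrix (Fin n) (Fin n) ℝ} (h : SeidelAssoc E E') :
    SeidelAssoc E' E := by
  obtain ⟨ν, hν, h⟩ := h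
  refine ⟨ν, hν, fun i j => ?_⟩
  rcases hν i with a | a <;> rcases hν j with b | b <;>
    rw [h i j, a, b] <;> ring

lemma assoc_trans {E E' E'' : Matrix (Fin n) (Fin n) ℝ} (h : SeidelAssoc E E')
    (h' : SeidelAssoc E' E'') : SeidelAssoc E E'' := by
  obtain ⟨ν, hν, h⟩ := h
  obtain ⟨μ, hμ, h'⟩ := h'
  refine ⟨fun i => ν i * μ i, fun i => ?_, fun i j => ?_⟩
  · show ν i * μ i = 1 ∨ ν i * μ i = -1
    rcases hν i with a | a <;> rcases hμ i with b | b <;> rw [a, b] <;> norm_num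
  · show E'' i j = ν i * μ i * (ν j * μ j) * E i j
    rw [h' i j, h i j]; ring

lemma assoc_permM {E E' : Matrix (Fin n) (Fin n) ℝ} (σ : Equiv.Perm (Fin n))
    (h : SeidelAssoc E E') : SeidelAssoc (permM σ E) (permM σ E') := by
  obtain ⟨ν, hν, h⟩ := h
  exact ⟨fun i => ν (σ.symm i), fun i => hν _, fun i j => h _ _⟩

lemma assoc_of_locM_eq {E E' : Matrix (Fin n) (Fin n) ℝ}
    (hE : ∀ i j, E i j = 1 ∨ E i j = -1) (hE' : ∀ i j, E' i j = 1 ∨ E' i j = -1)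
    (p : Fin n) (h : locM E p = locM E' p) : SeidelAssoc E E' := by
  refine ⟨fun k => E k p * E' k p, fun k => ?_, fun k l => ?_⟩
  · show E k p * E' k p = 1 ∨ E k p * E' k p = -1
    rcases hE k p with a | a <;> rcases hE' k p with b | b <;> rw [a, b] <;> norm_num
  · show E' k l = E k p * E' k p * (E l p * E' l p) * E k l
    have hkl : E k p * E l p * E k l = E' k p * E' l p * E' k l :=
      congrFun (congrFun h k) l
    rcases hE k p with a | a <;> rcases hE l p with b | b <;>
      rcases hE' k p with a' | a' <;> rcases hE' l p with b' | b' <;>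
      rw [a, b, a', b'] at hkl ⊢ <;> linarith

lemma stab_elem (E : Matrix (Fin n) (Fin n) ℝ) (hE : IsSeidel E) (p : Fin n)
    (hp : ∀ z w : Fin n, z ≠ p → w ≠ p →
      ∃ σ : Equiv.Perm (Fin n), permM σ (locM E p) = locM E p ∧ σ z = w)
    {z w : Fin n} (hz : z ≠ p) (hw : w ≠ p) :
    ∃ σ : Equiv.Perm (Fin n), SeidelAssoc E (permM σ E) ∧ σ p = p ∧ σ z = w := by
  obtain ⟨σ, hσ, hzw⟩ := hp z w hz hw
  set L := locM E p with hLdef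
  have hsq : ∀ i j : Fin n, E i j * E i j = 1 := by
    intro i j; rcases hE.2.2 i j with a | a <;> rw [a] <;> norm_num
  have hrow : ∀ k, L k p = 1 := by
    intro k
    have : L k p = E k p * E p p * E k p := rfl
    rw [this, hE.2.1 p]
    linear_combination hsq k p
  have hsym : ∀ k l, L k l = L l k := by
    intro k l
    have e1 : L k l = E k p * E l p * E k l := rfl
    have e2 : L l k = E l p * E k p * E l k := rfl
    rw [e1, e2, hE.1.apply l k]; ring
  have hperm : ∀ a b, L (σ a) (σ b) = L a b := by
    intro a b
    have := congrFun (congrFun hσ (σ a)) (σ b)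
    simp [permM_apply] at this
    exact this.symm
  have hrowu : ∀ k, L k (σ p) = 1 := by
    intro k
    have := hperm (σ.symm k) p
    simp at this
    rw [this]; exact hrow _
  have hall : ∀ i j : Fin n, i = p ∨ i = σ p ∨ j = p ∨ j = σ p → L i j = 1 := by
    intro i j hij
    rcases hij with h1 | h1 | h1 | h1 <;> subst h1
    · rw [hsym]; exact hrow j
    · rw [hsym]; exact hrowu j
    · exact hrow i
    · exact hrowu i
  have hτmem : ∀ c : Fin n, (c = p ∨ c = σ p) →
      (Equiv.swap p (σ p) c = p ∨ Equiv.swap p (σ p) c = σ p) := by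
    intro c hc; rcases hc with hc | hc <;> subst hc <;> simp
  have hτfix : ∀ c : Fin n, ¬(c = p ∨ c = σ p) → Equiv.swap p (σ p) c = c := by
    intro c hc; push_neg at hc; exact Equiv.swap_apply_of_ne_of_ne hc.1 hc.2
  have hswap : permM (Equiv.swap p (σ p)) L = L := by
    ext i j
    have e : permM (Equiv.swap p (σ p)) L i j
        = L (Equiv.swap p (σ p) i) (Equiv.swap p (σ p) j) := by
      rw [permM_apply, Equiv.symm_swap]
    rw [e]
    by_cases hi : i = p ∨ i = σ p
    · rw [hall _ _ (by have := hτmem i hi; tauto), hall _ _ (by tauto)]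
    · by_cases hj : j = p ∨ j = σ p
      · rw [hall _ _ (by have := hτmem j hj; tauto), hall _ _ (by tauto)]
      · rw [hτfix i hi, hτfix j hj]
  refine ⟨Equiv.swap p (σ p) * σ, ?_, ?_, ?_⟩
  · have hfix : (Equiv.swap p (σ p) * σ) p = p := by
      simp [Equiv.Perm.mul_apply]
    have hLoc : locM (permM (Equiv.swap p (σ p) * σ) E) p = L := by
      have h1 := locM_permM (Equiv.swap p (σ p) * σ) E p
      rw [hfix] at h1
      rw [h1, permM_mul, hσ, hswap]
    exact assoc_of_locM_eq hE.2.2 (fun i j => hE.2.2 _ _) p hLoc.symm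
  · simp [Equiv.Perm.mul_apply]
  · have hwu : w ≠ σ p := by
      intro h; apply hz; exact σ.injective (hzw.trans h)
    simp [Equiv.Perm.mul_apply, hzw, Equiv.swap_apply_of_ne_of_ne hw hwu]


lemma inG_mul {E : Matrix (Fin n) (Fin n) ℝ} {g h : Equiv.Perm (Fin n)}
    (hg : SeidelAssoc E (permM g E)) (hh : SeidelAssoc E (permM h E)) :
    SeidelAssoc E (permM (g * h) E) := by
  rw [permM_mul]
  exact assoc_trans hg (assoc_permM g hh)

lemma inG_inv {E : Matrix (Fin n) (Fin n) ℝ} {g : Equiv.Perm (Fin n)}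
    (hg : SeidelAssoc E (permM g E)) : SeidelAssoc E (permM g⁻¹ E) := by
  have h1 : permM g⁻¹ (permM g E) = E := by
    rw [← permM_mul, inv_mul_cancel, permM_one]
  have := assoc_permM g⁻¹ hg
  rw [h1] at this
  exact assoc_symm this

end aux

/-- if for two distinct points `x, y` the automorphism groups of the localized
graphs `ˣΓ` and `ʸΓ` are transitive on `X \ {x}` and `X \ {y}` respectively, then `G(E)` acts
doubly transitively on `X`. -/
theorem doubly_transitive_of_two_points (n : ℕ) (hn : 3 ≤ n)
    (E : Matrix (Fin n) (Fin n) ℝ) (hE : IsSeidel E) (x y : Fin n) (hxy : x ≠ y)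
    (hx : ∀ z w : Fin n, z ≠ x → w ≠ x →
      ∃ σ : Equiv.Perm (Fin n), permM σ (locM E x) = locM E x ∧ σ z = w)
    (hy : ∀ z w : Fin n, z ≠ y → w ≠ y →
      ∃ τ : Equiv.Perm (Fin n), permM τ (locM E y) = locM E y ∧ τ z = w) :
    ∀ i j k l : Fin n, i ≠ j → k ≠ l →
      ∃ ρ : Equiv.Perm (Fin n), SeidelAssoc E (permM ρ E) ∧ ρ i = k ∧ ρ j = l := by
  have Sx : ∀ z w : Fin n, z ≠ x → w ≠ x →
      ∃ σ : Equiv.Perm (Fin n), SeidelAssoc E (permM σ E) ∧ σ x = x ∧ σ z = w :=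
    fun z w hz hw => stab_elem E hE x hx hz hw
  have Sy : ∀ z w : Fin n, z ≠ y → w ≠ y →
      ∃ σ : Equiv.Perm (Fin n), SeidelAssoc E (permM σ E) ∧ σ y = y ∧ σ z = w :=
    fun z w hz hw => stab_elem E hE y hy hz hw
  obtain ⟨c, hcx, hcy⟩ : ∃ c : Fin n, c ≠ x ∧ c ≠ y := by
    by_contra hcon
    push_neg at hcon
    have hsub : (Finset.univ : Finset (Fin n)) ⊆ {x, y} := by
      intro c _
      simp only [Finset.mem_insert, Finset.mem_singleton]
      by_cases hcx' : c = x
      · exact Or.inl hcx'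
      · exact Or.inr (hcon c hcx')
    have h2 := Finset.card_le_card hsub
    have h3 : ({x, y} : Finset (Fin n)).card ≤ 2 :=
      (Finset.card_insert_le _ _).trans (by simp)
    simp [Finset.card_univ] at h2
    omega
  have htrans : ∀ a : Fin n, ∃ g : Equiv.Perm (Fin n),
      SeidelAssoc E (permM g E) ∧ g a = x := by
    intro a
    by_cases hax : a = x
    · exact ⟨1, by rw [permM_one]; exact assoc_refl E, by simp [hax]⟩
    by_cases hay : a = y
    · obtain ⟨g1, hg1, _, hg1z⟩ := Sx y c (Ne.symm hxy) hcx
      obtain ⟨g2, hg2, _, hg2z⟩ := Sy c x hcy hxy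
      refine ⟨g2 * g1, inG_mul hg2 hg1, ?_⟩
      rw [Equiv.Perm.mul_apply, hay, hg1z, hg2z]
    · obtain ⟨g, hg, _, hgz⟩ := Sy a x hay hxy
      exact ⟨g, hg, hgz⟩
  intro i j k l hij hkl
  obtain ⟨g, hg, hgi⟩ := htrans i
  obtain ⟨h, hh, hhk⟩ := htrans k
  have hgj : g j ≠ x := by
    rw [← hgi]
    exact fun e => hij (g.injective e).symm
  have hhl : h l ≠ x := by
    rw [← hhk]
    exact fun e => hkl (h.injective e).symm
  obtain ⟨s, hs, hsx, hsj⟩ := Sx (g j) (h l) hgj hhl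
  refine ⟨h⁻¹ * (s * g), inG_mul (inG_inv hh) (inG_mul hs hg), ?_, ?_⟩
  · rw [Equiv.Perm.mul_apply, Equiv.Perm.mul_apply, hgi, hsx, ← hhk,
      Equiv.Perm.inv_def, Equiv.symm_apply_apply]
  · rw [Equiv.Perm.mul_apply, Equiv.Perm.mul_apply, hsj, Equiv.Perm.inv_def, Equiv.symm_apply_apply]
end
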